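/- The elements X^μ Ť_w (μ ∈ P, w ∈ W) are linearly independent over 𝕃 in 𝒜 # W; likewise the elements Ť_w X^μ (μ ∈ P, w ∈ W) are linearly independent over 𝕃. -/

import Mathlib

open scoped BigOperators
open RealInnerProductSpace

noncomputable section

/-- The alternating word `x y x y ⋯` with `m` factors. -/
def braidWord {M : Type} [Monoid M] (x y : M) (m : ℕ) : M :=
  ((List.range m).map (fun i => if i % 2 = 0 then x else y)).prod

instance instCoeFunMultiplicativeAddAut {P : Type} [Add P] :
    CoeFun (Multiplicative (AddAut P)) (fun _ => P → P) :=
  ⟨fun e => (Multiplicative.toAdd e : AddAut P)⟩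

/-- The data of:  an irreducible reduced crystallographic root system `R₀` of full rank,
realized inside its weight lattice `P` which is embedded in a Euclidean space `V`;
the ring `𝕃` of coefficients together with the Weyl-invariant Hecke parameters `τ`;
the extended affine Weyl group `W = W₀ ⋉ t(c P̂)` of the corresponding irreducible reduced
affine root system `R` (affine roots are recorded as pairs `(α, r) ∈ P × ℤ` standing for
`α + m_α r c`), with its simple reflections `s₀, …, s_n`, length function, and the
subgroup `Ω` of length-zero elements; the localization `𝒜` of the group algebra `𝕃[P]`
at the Weyl denominator `δ`; and the smash product `𝒜 # W`. -/
structure DAHACtx where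
  n : ℕ
  hn : 0 < n
  c : ℝ
  hc : 0 < c
  /- the coefficient algebra 𝕃 -/
  L : Type
  [ringL : CommRing L]
  [algCL : Algebra ℂ L]
  [ntL : Nontrivial L]
  /- the ambient Euclidean space V -/
  V : Type
  [nacgV : NormedAddCommGroup V]
  [ipsV : InnerProductSpace ℝ V]
  [fdV : FiniteDimensional ℝ V]
  finrankV : Module.finrank ℝ V = n
  /- the weight lattice P, embedded in V -/
  P : Type
  [acgP : AddCommGroup P]
  [decP : DecidableEq P]
  ePV : P →+ V
  ePV_inj : Function.Injective ePV
  /- the finite root system R₀ (its elements lie in the root lattice Q ⊆ P) -/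
  R₀ : Finset P
  root_ne : ∀ α ∈ R₀, α ≠ (0 : P)
  root_neg : ∀ α ∈ R₀, -α ∈ R₀
  root_span : Submodule.span ℝ (ePV '' R₀) = ⊤
  root_reduced : ∀ α ∈ R₀, ∀ β ∈ R₀, ∀ t : ℝ, ePV β = t • ePV α → t = 1 ∨ t = -1
  /- the coroot pairing ⟨λ, α^∨⟩ (crystallographic integrality) -/
  cp : P → P →+ ℤ
  cp_self : ∀ α ∈ R₀, cp α α = 2
  cp_inner : ∀ α ∈ R₀, ∀ lam : P, ((cp α lam : ℝ)) * ⟪ePV α, ePV α⟫ = 2 * ⟪ePV lam, ePV α⟫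
  root_refl : ∀ α ∈ R₀, ∀ β ∈ R₀, β - cp α β • α ∈ R₀
  irreducible : ∀ S : Finset P, S ⊆ R₀ → S.Nonempty → (R₀ \ S).Nonempty →
      ∃ α ∈ S, ∃ β ∈ R₀ \ S, cp α β ≠ 0
  weight_lattice : ∀ v : V,
      (∀ α ∈ R₀, ∃ z : ℤ, (z : ℝ) * ⟪ePV α, ePV α⟫ = 2 * ⟪v, ePV α⟫) → v ∈ Set.range ePV
  /- the simple roots:  αP j, for j = 1, …, n, is the simple basis of R₀⁺, while
     αP 0 = α₀ is the gradient of the affine simple root a₀ = α₀ + c -/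
  αP : Fin (n+1) → P
  αP_mem : ∀ j, αP j ∈ R₀
  simple_indep : LinearIndependent ℝ (fun j : Fin n => ePV (αP j.succ))
  simple_pos : ∀ β ∈ R₀,
      (∃ g : Fin n → ℕ, β = ∑ j : Fin n, (g j : ℤ) • αP j.succ) ∨
      (∃ g : Fin n → ℕ, β = -(∑ j : Fin n, (g j : ℤ) • αP j.succ))
  /- the Hecke parameters τ_α  (recorded as a function of the gradient root) -/
  τR : P → Lˣ
  /- the extended affine Weyl group W, together with:
     the simple reflections s j (j = 0, …, n);  the gradient action w ↦ w' on P;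
     the reflections s_a attached to the affine roots a = (α, r);  the action of W on
     affine roots;  the gradient projection w = v t_{cλ} ↦ v and the translations t_{cμ} -/
  W : Type
  [grpW : Group W]
  s : Fin (n+1) → W
  grAct : W →* Multiplicative (AddAut P)
  saff : P × ℤ → W
  saff_simple : ∀ j : Fin (n+1), saff (αP j, if j = 0 then 1 else 0) = s j
  saff_sq : ∀ a : P × ℤ, saff a * saff a = 1
  grAct_saff : ∀ (a : P × ℤ) (lam : P), grAct (saff a) lam = lam - cp a.1 lam • a.1
  root_stable : ∀ (w : W), ∀ α ∈ R₀, grAct w α ∈ R₀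
  τ_inv : ∀ (w : W) (α : P), τR (grAct w α) = τR α
  wact : W → P × ℤ → P × ℤ
  wact_one : ∀ a, wact 1 a = a
  wact_mul : ∀ v w a, wact (v * w) a = wact v (wact w a)
  wact_fst : ∀ w a, (wact w a).1 = grAct w a.1
  saff_conj : ∀ w a, saff (wact w a) = w * saff a * w⁻¹
  prW : W →* W
  prW_saff : ∀ a : P × ℤ, prW (saff a) = saff (a.1, 0)
  grAct_prW : ∀ w, grAct (prW w) = grAct w
  Phat : Type
  [acgPhat : AddCommGroup Phat]
  tr : Phat → W
  tr_add : ∀ μ ν, tr (μ + ν) = tr μ * tr ν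
  tr_inj : Function.Injective tr
  grAct_tr : ∀ (μ : Phat) (lam : P), grAct (tr μ) lam = lam
  prW_tr : ∀ μ, prW (tr μ) = 1
  W_decomp : ∀ w : W, ∃! μ : Phat, w = prW w * tr μ
  /- the length function on W and the subgroup Ω of length-zero elements -/
  len : W → ℕ
  len_s : ∀ j, len (s j) = 1
  Ω : Subgroup W
  Ω_len : ∀ w : W, w ∈ Ω ↔ len w = 0
  Ω_comm : ∀ u v : Ω, u * v = v * u
  exists_reduced : ∀ w : W, ∃ (u : Ω) (l : List (Fin (n+1))),
      w = (u : W) * (l.map s).prod ∧ l.length = len w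
  len_min : ∀ (w : W) (u : Ω) (l : List (Fin (n+1))),
      w = (u : W) * (l.map s).prod → len w ≤ l.length
  σΩ : Ω →* Equiv.Perm (Fin (n+1))
  Ω_conj : ∀ (u : Ω) (j : Fin (n+1)), (u : W) * s j * (u : W)⁻¹ = s (σΩ u j)
  Ω_aff : ∀ (u : Ω) (j : Fin (n+1)),
      wact (u : W) (αP j, if j = 0 then 1 else 0) = (αP (σΩ u j), if σΩ u j = 0 then 1 else 0)
  /- the elements (X^λ - X^{s_j'λ})/(1 - X^{-α_j}) of 𝕃[P] -/
  DL : Fin (n+1) → P → AddMonoidAlgebra L P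
  DL_spec : ∀ (j : Fin (n+1)) (lam : P),
      (1 - AddMonoidAlgebra.of' L P (-(αP j))) * DL j lam
        = AddMonoidAlgebra.of' L P lam - AddMonoidAlgebra.of' L P (grAct (s j) lam)
  /- 𝒜 : the localization of 𝕃[P] at the Weyl denominator δ = ∏_{α ∈ R₀} (1 - X^α) -/
  A : Type
  [cringA : CommRing A]
  [algLA : Algebra L A]
  toA : AddMonoidAlgebra L P →ₐ[L] A
  uδ : Aˣ
  uδ_spec : (uδ : A) = toA (∏ α ∈ R₀, (1 - AddMonoidAlgebra.of' L P α))
  A_surj : ∀ x : A, ∃ (f : AddMonoidAlgebra L P) (k : ℕ), x = toA f * (((uδ⁻¹ : Aˣ) : A)) ^ k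
  A_ker : ∀ f : AddMonoidAlgebra L P, toA f = 0 →
      ∃ k : ℕ, (∏ α ∈ R₀, (1 - AddMonoidAlgebra.of' L P α)) ^ k * f = 0
  uXR : P → Aˣ
  uXR_spec : ∀ α ∈ R₀, (uXR α : A) = 1 - toA (AddMonoidAlgebra.of' L P (-α))
  /- the action of W on 𝒜 (through the gradient w ↦ w') -/
  actA : W →* (A ≃ₐ[L] A)
  actA_X : ∀ (w : W) (lam : P),
      actA w (toA (AddMonoidAlgebra.of' L P lam)) = toA (AddMonoidAlgebra.of' L P (grAct w lam))
  /- the smash product 𝒜 # W -/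
  SW : Type
  [ringSW : Ring SW]
  [algLSW : Algebra L SW]
  ιA : A →ₐ[L] SW
  ιW : W →* SWˣ
  cross : ∀ (w : W) (f : A), ((ιW w : SWˣ) : SW) * ιA f = ιA (actA w f) * ((ιW w : SWˣ) : SW)
  decomp : Function.Bijective
      (fun x : W →₀ A => x.sum fun w f => ιA f * ((ιW w : SWˣ) : SW))

attribute [instance] DAHACtx.ringL DAHACtx.algCL DAHACtx.ntL DAHACtx.nacgV DAHACtx.ipsV
  DAHACtx.fdV DAHACtx.acgP DAHACtx.decP DAHACtx.grpW DAHACtx.acgPhat DAHACtx.cringA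
  DAHACtx.algLA DAHACtx.ringSW DAHACtx.algLSW

namespace DAHACtx

variable (C : DAHACtx)

/-- The Hecke parameter `τ_j = τ_{a_j}`. -/
def τ (j : Fin (C.n + 1)) : C.Lˣ := C.τR (C.αP j)

/-- `m_{jk}`, the order of `s_j s_k` in `W` (with the value `0` standing for `m_{jk} = ∞`). -/
def m (j k : Fin (C.n + 1)) : ℕ := orderOf (C.s j * C.s k)

/-- The monomial `X^λ` in the group algebra `𝕃[P]`. -/
def Xl (lam : C.P) : AddMonoidAlgebra C.L C.P := AddMonoidAlgebra.of' C.L C.P lam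

/-- The monomial `X^λ`, viewed inside the smash product `𝒜 # W`. -/
def XS (lam : C.P) : C.SW := C.ιA (C.toA (C.Xl lam))

/-- The simple affine roots `a_0 = α₀ + c` and `a_j = α_j` (`1 ≤ j ≤ n`). -/
def asimple (j : Fin (C.n + 1)) : C.P × ℤ := (C.αP j, if j = 0 then 1 else 0)

/-- The Demazure–Lusztig element
`Ť(a) = τ_a s_a + (τ_a - τ_a⁻¹)(1 - X^{-a'})⁻¹ (1 - s_a)` of `𝒜 # W`. -/
def Tc (a : C.P × ℤ) : C.SW :=
  ((C.τR a.1 : C.L)) • ((C.ιW (C.saff a) : C.SWˣ) : C.SW)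
    + C.ιA ((((C.τR a.1 : C.L)) - (((C.τR a.1)⁻¹ : C.Lˣ) : C.L)) • (((C.uXR a.1)⁻¹ : C.Aˣ) : C.A))
        * (1 - ((C.ιW (C.saff a) : C.SWˣ) : C.SW))

/-- The Demazure–Lusztig element `Ť_j = Ť(a_j)`. -/
def Tch (j : Fin (C.n + 1)) : C.SW := C.Tc (C.asimple j)

/-- `w = u s_{j₁} ⋯ s_{j_ℓ}` is a reduced decomposition of `w` (`u ∈ Ω`, `ℓ = ℓ(w)`). -/
def IsReducedWord (w : C.W) (u : C.Ω) (l : List (Fin (C.n + 1))) : Prop :=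
  w = (u : C.W) * (l.map C.s).prod ∧ l.length = C.len w

/-- A choice of the `Ω`-part of a reduced decomposition of `w`. -/
def redΩ (w : C.W) : C.Ω := (C.exists_reduced w).choose

/-- A choice of reduced word for `w`. -/
def redList (w : C.W) : List (Fin (C.n + 1)) := (C.exists_reduced w).choose_spec.choose

theorem red_spec (w : C.W) : C.IsReducedWord w (C.redΩ w) (C.redList w) :=
  (C.exists_reduced w).choose_spec.choose_spec

/-- The element `Ť_w = u Ť_{j₁} ⋯ Ť_{j_ℓ}` of `𝒜 # W`, for a (choice of) reduced
decomposition `w = u s_{j₁} ⋯ s_{j_ℓ}`. -/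
def TwS (w : C.W) : C.SW :=
  ((C.ιW (C.redΩ w) : C.SWˣ) : C.SW) * ((C.redList w).map fun j => C.Tch j).prod

/-- The Bruhat partial order on `W`:  `v ≤ w` iff a reduced expression for `v` is obtained
from a reduced expression for `w` by deleting simple reflections. -/
def BruhatLE (v w : C.W) : Prop :=
  ∃ (u : C.Ω) (lw lv : List (Fin (C.n + 1))),
    C.IsReducedWord w u lw ∧ C.IsReducedWord v u lv ∧ lv.Sublist lw

end DAHACtx

namespace DAHACtx

variable (C : DAHACtx)

/-! ### Non-zero-divisors -/

/-- Non-zero-divisor in `𝒜`. -/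
def NZDA (a : C.A) : Prop := ∀ x : C.A, a * x = 0 → x = 0

/-- Non-zero-divisor in `𝕃[P]`. -/
def regLP (g : AddMonoidAlgebra C.L C.P) : Prop :=
  ∀ f : AddMonoidAlgebra C.L C.P, g * f = 0 → f = 0

lemma nzda_one : C.NZDA 1 := fun x hx => by simpa using hx

lemma nzda_mul {a b : C.A} (ha : C.NZDA a) (hb : C.NZDA b) : C.NZDA (a * b) := by
  intro x hx
  rw [mul_assoc] at hx
  exact hb x (ha _ hx)

lemma regLP_one : C.regLP 1 := fun f hf => by simpa using hf

lemma regLP_mul {a b : AddMonoidAlgebra C.L C.P} (ha : C.regLP a) (hb : C.regLP b) :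
    C.regLP (a * b) := by
  intro f hf
  rw [mul_assoc] at hf
  exact hb f (ha _ hf)

lemma regLP_pow {a : AddMonoidAlgebra C.L C.P} (ha : C.regLP a) (k : ℕ) : C.regLP (a ^ k) := by
  induction k with
  | zero => simpa using C.regLP_one
  | succ k ih => rw [pow_succ]; exact C.regLP_mul ih ha

/-! ### Torsion-freeness of `P` -/

lemma zsmul_ne_zero {γ : C.P} (hγ : γ ≠ 0) {z : ℤ} (hz : z ≠ 0) : z • γ ≠ 0 := by
  intro h
  have h1 : C.ePV (z • γ) = 0 := by rw [h, map_zero]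
  rw [map_zsmul] at h1
  have h2 : C.ePV γ ≠ 0 := fun h' => hγ (C.ePV_inj (by simpa using h'))
  have h3 : (z : ℝ) • C.ePV γ = 0 := by rw [Int.cast_smul_eq_zsmul]; exact h1
  rcases smul_eq_zero.mp h3 with h4 | h4
  · exact hz (by exact_mod_cast h4)
  · exact h2 h4

/-! ### The key non-zero-divisor lemma in `𝕃[P]` -/

lemma regLP_binom (a b : C.Lˣ) (γ : C.P) (hγ : γ ≠ 0) :
    C.regLP ((a : C.L) • (1 : AddMonoidAlgebra C.L C.P) - (b : C.L) • C.Xl γ) := by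
  classical
  intro f hf
  by_contra hf0
  have key : ∀ lam : C.P, f.coeff lam ≠ 0 → f.coeff (lam - γ) ≠ 0 := by
    intro lam hlam hz
    have h2 : (((a : C.L) • (1 : AddMonoidAlgebra C.L C.P) - (b : C.L) • C.Xl γ) * f).coeff lam
        = (0 : AddMonoidAlgebra C.L C.P).coeff lam := by rw [hf]
    rw [sub_mul, smul_mul_assoc, smul_mul_assoc, one_mul, AddMonoidAlgebra.coeff_sub, Finsupp.sub_apply,
      AddMonoidAlgebra.coeff_smul_apply, AddMonoidAlgebra.coeff_smul_apply] at h2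
    have h3 : (C.Xl γ * f).coeff lam = f.coeff (lam - γ) := by
      have h4 := AddMonoidAlgebra.coeff_single_mul_apply f (1 : C.L) γ lam
      simpa [Xl, AddMonoidAlgebra.of', sub_eq_neg_add] using h4
    rw [h3, hz] at h2
    simp only [AddMonoidAlgebra.coeff_zero, Finsupp.coe_zero, Pi.zero_apply, smul_zero, mul_zero, sub_zero, smul_eq_mul] at h2
    exact hlam ((Units.mul_right_eq_zero a).mp h2)
  obtain ⟨lam0, hlam0⟩ : ∃ lam, f.coeff lam ≠ 0 := by
    by_contra h
    push_neg at h
    exact hf0 (AddMonoidAlgebra.coeff_injective (Finsupp.ext h))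
  have mem : ∀ k : ℕ, lam0 - k • γ ∈ f.coeff.support := by
    intro k
    induction k with
    | zero => simpa using Finsupp.mem_support_iff.mpr hlam0
    | succ k ih =>
      have h := key _ (Finsupp.mem_support_iff.mp ih)
      refine Finsupp.mem_support_iff.mpr ?_
      have he : lam0 - (k + 1) • γ = (lam0 - k • γ) - γ := by
        rw [succ_nsmul]; abel
      rwa [he]
  have inj : Function.Injective (fun k : ℕ => lam0 - k • γ) := by
    intro k1 k2 h
    simp only at h
    have h1 : (k1 : ℤ) • γ = (k2 : ℤ) • γ := by
      rw [natCast_zsmul, natCast_zsmul]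
      exact sub_right_injective h
    by_contra hne
    have h2 : ((k1 : ℤ) - k2) • γ = 0 := by
      rw [sub_zsmul, h1]; abel
    have h3 : ((k1 : ℤ) - k2) ≠ 0 := by
      intro h4
      exact hne (by exact_mod_cast sub_eq_zero.mp h4)
    exact C.zsmul_ne_zero hγ h3 h2
  exact (Set.infinite_of_injective_forall_mem inj mem) f.coeff.support.finite_toSet

lemma regLP_delta : C.regLP (∏ α ∈ C.R₀, (1 - AddMonoidAlgebra.of' C.L C.P α)) := by
  classical
  refine Finset.prod_induction _ C.regLP (fun a b ha hb => C.regLP_mul ha hb) C.regLP_one ?_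
  intro α hα
  have h := C.regLP_binom 1 1 α (C.root_ne α hα)
  simpa [Xl] using h

/-! ### Transfer of non-zero-divisors to `𝒜` -/

lemma nzda_toA {g : AddMonoidAlgebra C.L C.P} (hg : C.regLP g) : C.NZDA (C.toA g) := by
  intro x hx
  obtain ⟨f, k, rfl⟩ := C.A_surj x
  have h1 : C.toA (g * f) * (((C.uδ⁻¹ : C.Aˣ) : C.A)) ^ k = 0 := by
    rw [map_mul, mul_assoc]; exact hx
  have h2 : C.toA (g * f) = 0 := by
    have h3 := congrArg (· * ((C.uδ : C.Aˣ) : C.A) ^ k) h1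
    simp only [zero_mul] at h3
    rwa [mul_assoc, ← mul_pow, Units.inv_mul, one_pow, mul_one] at h3
  obtain ⟨m, hm⟩ := C.A_ker _ h2
  have hf : f = 0 :=
    (C.regLP_mul (C.regLP_pow C.regLP_delta m) hg) f (by rw [mul_assoc]; exact hm)
  rw [hf, map_zero, zero_mul]

lemma nzda_act {a : C.A} (ha : C.NZDA a) (w : C.W) : C.NZDA (C.actA w a) := by
  intro x hx
  have h := congrArg (C.actA w⁻¹) hx
  rw [map_mul, map_zero] at h
  have e : C.actA w⁻¹ (C.actA w a) = a := by
    have h1 : C.actA w⁻¹ * C.actA w = 1 := by rw [← map_mul, inv_mul_cancel, map_one]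
    calc C.actA w⁻¹ (C.actA w a) = (C.actA w⁻¹ * C.actA w) a := rfl
    _ = a := by rw [h1]; rfl
  rw [e] at h
  have h2 := ha _ h
  have h3 := congrArg (C.actA w) h2
  rw [map_zero] at h3
  have e2 : C.actA w (C.actA w⁻¹ x) = x := by
    have h1 : C.actA w * C.actA w⁻¹ = 1 := by rw [← map_mul, mul_inv_cancel, map_one]
    calc C.actA w (C.actA w⁻¹ x) = (C.actA w * C.actA w⁻¹) x := rfl
    _ = x := by rw [h1]; rfl
  rwa [e2] at h3

lemma nzda_of_mul_unit {a : C.A} (u : C.Aˣ) (h : C.NZDA (a * (u : C.A))) : C.NZDA a := by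
  intro x hx
  have h1 : a * (u : C.A) * (((u⁻¹ : C.Aˣ) : C.A) * x) = 0 := by
    rw [mul_assoc, ← mul_assoc (u : C.A), Units.mul_inv, one_mul]
    exact hx
  have h2 := h _ h1
  have h3 := congrArg ((u : C.A) * ·) h2
  simpa [← mul_assoc, Units.mul_inv] using h3

/-! ### The Demazure–Lusztig coefficients -/

/-- The coefficient `(τ_j - τ_j⁻¹)(1 - X^{-α_j})⁻¹` of `Ť_j`. -/
def gA (j : Fin (C.n + 1)) : C.A :=
  (((C.τ j : C.L)) - (((C.τ j)⁻¹ : C.Lˣ) : C.L)) • (((C.uXR (C.αP j))⁻¹ : C.Aˣ) : C.A)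

/-- The coefficient of `s_j` in `Ť_j`. -/
def fA (j : Fin (C.n + 1)) : C.A := algebraMap C.L C.A ((C.τ j : C.L)) - C.gA j

lemma Tch_eq (j : Fin (C.n + 1)) :
    C.Tch j = C.ιA (C.gA j) + C.ιA (C.fA j) * ((C.ιW (C.s j) : C.SWˣ) : C.SW) := by
  rw [← C.saff_simple j]
  show C.Tc (C.asimple j) = _
  rw [Tc, fA, gA]
  have h1 : (C.asimple j).1 = C.αP j := rfl
  have h2 : C.saff (C.αP j, if j = 0 then 1 else 0) = C.saff (C.asimple j) := rfl
  rw [h2, h1]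
  have hsm : ((C.τ j : C.L)) • ((C.ιW (C.saff (C.asimple j)) : C.SWˣ) : C.SW)
      = C.ιA (algebraMap C.L C.A (C.τ j : C.L)) * ((C.ιW (C.saff (C.asimple j)) : C.SWˣ) : C.SW) := by
    rw [AlgHom.commutes, Algebra.smul_def]
  rw [show C.τR (C.αP j) = C.τ j from rfl, hsm, map_sub]
  noncomm_ring

lemma fA_mul (j : Fin (C.n + 1)) :
    C.fA j * ((C.uXR (C.αP j) : C.Aˣ) : C.A)
      = C.toA ((((C.τ j)⁻¹ : C.Lˣ) : C.L) • (1 : AddMonoidAlgebra C.L C.P)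
          - ((C.τ j : C.L)) • C.Xl (-C.αP j)) := by
  have hx := C.uXR_spec (C.αP j) (C.αP_mem j)
  rw [fA, gA, sub_mul, smul_mul_assoc, Units.inv_mul, hx]
  rw [map_sub (C.toA), map_smul, map_smul, map_one]
  simp only [Xl, Algebra.smul_def, mul_one, map_mul, AlgHom.commutes, map_sub]
  ring

lemma fA_nzda (j : Fin (C.n + 1)) : C.NZDA (C.fA j) := by
  refine C.nzda_of_mul_unit (C.uXR (C.αP j)) ?_
  rw [C.fA_mul j]
  refine C.nzda_toA (C.regLP_binom ((C.τ j)⁻¹) (C.τ j) (-C.αP j) ?_)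
  exact neg_ne_zero.mpr (C.root_ne _ (C.αP_mem j))

/-! ### Length lemmas -/

lemma len_one : C.len 1 = 0 := (C.Ω_len 1).mp (Subgroup.one_mem _)

lemma len_omega_le (u : C.Ω) (w : C.W) : C.len ((u : C.W) * w) ≤ C.len w := by
  obtain ⟨u', l, hw, hl⟩ := C.exists_reduced w
  have h : (u : C.W) * w = ((u * u' : C.Ω) : C.W) * (l.map C.s).prod := by
    rw [hw, Subgroup.coe_mul, mul_assoc]
  have h2 := C.len_min _ _ _ h
  omega

lemma len_omega (u : C.Ω) (w : C.W) : C.len ((u : C.W) * w) = C.len w := by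
  have h1 := C.len_omega_le u w
  have h2 := C.len_omega_le u⁻¹ ((u : C.W) * w)
  rw [← mul_assoc] at h2
  rw [show ((u⁻¹ : C.Ω) : C.W) * (u : C.W) = 1 by
    rw [← Subgroup.coe_mul, inv_mul_cancel, Subgroup.coe_one]] at h2
  rw [one_mul] at h2
  omega

lemma len_s_mul_le (j : Fin (C.n + 1)) (w : C.W) : C.len (C.s j * w) ≤ C.len w + 1 := by
  obtain ⟨u, l, hw, hl⟩ := C.exists_reduced w
  have hconj := C.Ω_conj u⁻¹ j
  have h : C.s j * w = (u : C.W) * (((C.σΩ u⁻¹ j) :: l).map C.s).prod := by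
    rw [List.map_cons, List.prod_cons, ← hconj, hw]
    simp only [Subgroup.coe_inv, inv_inv]
    group
  have h2 := C.len_min _ _ _ h
  simp only [List.length_cons] at h2
  omega

lemma len_prod_le (l : List (Fin (C.n + 1))) : C.len ((l.map C.s).prod) ≤ l.length :=
  C.len_min _ 1 l (by rw [Subgroup.coe_one, one_mul])

/-! ### The map `Φ : (W →₀ 𝒜) → 𝒜 # W` -/

/-- The `𝕃`-linear isomorphism onto `𝒜 # W` sending `Σ f_w ⊗ w` to `Σ ιA(f_w) ιW(w)`. -/
def Φ : (C.W →₀ C.A) →ₗ[C.L] C.SW where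
  toFun F := F.sum fun w f => C.ιA f * ((C.ιW w : C.SWˣ) : C.SW)
  map_add' F G := Finsupp.sum_add_index' (by simp) (by intros; rw [map_add, add_mul])
  map_smul' c F := by
    rw [Finsupp.sum_smul_index' (by simp), RingHom.id_apply, Finsupp.smul_sum]
    exact Finsupp.sum_congr fun x _ => by rw [map_smul, smul_mul_assoc]

lemma Φ_apply (F : C.W →₀ C.A) :
    C.Φ F = F.sum fun w f => C.ιA f * ((C.ιW w : C.SWˣ) : C.SW) := rfl

lemma Φ_single (w : C.W) (a : C.A) :
    C.Φ (Finsupp.single w a) = C.ιA a * ((C.ιW w : C.SWˣ) : C.SW) := by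
  rw [Φ_apply]
  exact Finsupp.sum_single_index (by simp)

lemma Φ_injective : Function.Injective C.Φ := by
  have h : ⇑C.Φ = (fun x : C.W →₀ C.A => x.sum fun w f => C.ιA f * ((C.ιW w : C.SWˣ) : C.SW)) :=
    rfl
  rw [h]
  exact C.decomp.injective

lemma Φ_mulA (c : C.A) (F : C.W →₀ C.A) :
    C.Φ (F.mapRange (fun a => c * a) (mul_zero c)) = C.ιA c * C.Φ F := by
  rw [Φ_apply, Φ_apply, Finsupp.sum_mapRange_index (by simp), Finsupp.sum, Finsupp.sum,
    Finset.mul_sum]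
  exact Finset.sum_congr rfl fun x _ => by rw [map_mul, mul_assoc]

lemma Φ_mulW (w : C.W) (F : C.W →₀ C.A) :
    C.Φ (Finsupp.mapDomain (fun x => w * x) (F.mapRange (C.actA w) (map_zero _)))
      = ((C.ιW w : C.SWˣ) : C.SW) * C.Φ F := by
  rw [Φ_apply, Φ_apply]
  rw [Finsupp.sum_mapDomain_index (by simp) (by intros; rw [map_add, add_mul])]
  rw [Finsupp.sum_mapRange_index (by simp)]
  rw [Finsupp.sum, Finsupp.sum, Finset.mul_sum]
  refine Finset.sum_congr rfl fun x _ => ?_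
  rw [map_mul, Units.val_mul, ← mul_assoc, ← C.cross, mul_assoc]

/-- Pointwise transform of a finitely supported family. -/
def tw (g : C.W → C.A → C.A) (F : C.W →₀ C.A) : C.W →₀ C.A :=
  F.sum fun x a => Finsupp.single x (g x a)

lemma tw_apply (g : C.W → C.A → C.A) (hg : ∀ x, g x 0 = 0) (F : C.W →₀ C.A) (y : C.W) :
    C.tw g F y = g y (F y) := by
  classical
  rw [tw, Finsupp.sum_apply, Finsupp.sum]
  by_cases hy : y ∈ F.support
  · rw [Finset.sum_eq_single y (fun b _ hb => Finsupp.single_eq_of_ne' hb)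
      (fun h => (h hy).elim)]
    exact Finsupp.single_eq_same
  · have hz : ∀ b ∈ F.support, (Finsupp.single b (g b (F b))) y = 0 := by
      intro b hb
      refine Finsupp.single_eq_of_ne' fun h => hy ?_
      rwa [← h]
    rw [Finset.sum_eq_zero hz, Finsupp.notMem_support_iff.mp hy, hg]

lemma Φ_tw (g : C.W → C.A → C.A) (F : C.W →₀ C.A) :
    C.Φ (C.tw g F) = F.sum fun x a => C.ιA (g x a) * ((C.ιW x : C.SWˣ) : C.SW) := by
  rw [tw, map_finsuppSum]
  exact Finsupp.sum_congr fun x _ => C.Φ_single x _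

/-! ### Expansion of the products of Demazure–Lusztig operators -/

lemma expand (l : List (Fin (C.n + 1))) :
    ∃ F : C.W →₀ C.A,
      C.Φ F = (l.map fun j => C.Tch j).prod ∧
      (∀ x : C.W, F x ≠ 0 → C.len x < l.length ∨ x = (l.map C.s).prod) ∧
      (C.len ((l.map C.s).prod) = l.length → C.NZDA (F ((l.map C.s).prod))) := by
  classical
  induction l with
  | nil =>
    refine ⟨Finsupp.single 1 1, ?_, ?_, ?_⟩
    · rw [Φ_single]; simp
    · intro x hx
      right
      simp only [List.map_nil, List.prod_nil]
      by_contra h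
      exact hx (Finsupp.single_eq_of_ne' (Ne.symm h))
    · intro _
      simp only [List.map_nil, List.prod_nil, Finsupp.single_eq_same]
      exact C.nzda_one
  | cons j l ih =>
    obtain ⟨F, hΦ, hsupp, htop⟩ := ih
    set x₀ := (l.map C.s).prod with hx₀
    set Fmd := Finsupp.mapDomain (fun x => C.s j * x) (F.mapRange (C.actA (C.s j)) (map_zero _))
      with hFmd
    refine ⟨F.mapRange (fun a => C.gA j * a) (mul_zero _)
        + Fmd.mapRange (fun a => C.fA j * a) (mul_zero _), ?_, ?_, ?_⟩
    · rw [map_add, Φ_mulA, Φ_mulA, hFmd, Φ_mulW, hΦ]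
      rw [List.map_cons, List.prod_cons, Tch_eq]
      rw [add_mul, mul_assoc]
    · intro x hx
      have hx12 : (F.mapRange (fun a => C.gA j * a) (mul_zero _)) x ≠ 0 ∨
          (Fmd.mapRange (fun a => C.fA j * a) (mul_zero _)) x ≠ 0 := by
        by_contra h
        push_neg at h
        rw [Finsupp.add_apply, h.1, h.2, add_zero] at hx
        exact hx rfl
      rcases hx12 with h | h
      · left
        have hF : F x ≠ 0 := by
          intro h0
          rw [Finsupp.mapRange_apply, h0, mul_zero] at h
          exact h rfl
        rcases hsupp x hF with h' | h'
        · simp only [List.length_cons]; omega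
        · have := C.len_prod_le l
          rw [← hx₀] at this
          rw [h']
          simp only [List.length_cons]
          omega
      · have hx' : x ∈ Fmd.support := by
          rw [Finsupp.mem_support_iff]
          intro h0
          rw [Finsupp.mapRange_apply, h0, mul_zero] at h
          exact h rfl
        obtain ⟨y, hy, rfl⟩ := Finset.mem_image.mp (Finsupp.mapDomain_support hx')
        have hFy : F y ≠ 0 := by
          have h1 := Finsupp.mem_support_iff.mp hy
          rw [Finsupp.mapRange_apply] at h1
          intro h0
          rw [h0, map_zero] at h1
          exact h1 rfl
        rcases hsupp y hFy with h' | h'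
        · left
          have h2 := C.len_s_mul_le j y
          simp only [List.length_cons]
          omega
        · right
          rw [h', List.map_cons, List.prod_cons]
    · intro hred
      have hprod : ((j :: l).map C.s).prod = C.s j * x₀ := by
        rw [List.map_cons, List.prod_cons]
      rw [hprod] at hred ⊢
      simp only [List.length_cons] at hred
      have hx₀len : C.len x₀ = l.length := by
        have h1 := C.len_prod_le l
        rw [← hx₀] at h1
        have h2 := C.len_s_mul_le j x₀
        omega
      have hFx₀ : C.NZDA (F x₀) := htop hx₀len
      have hnot : F (C.s j * x₀) = 0 := by
        by_contra h0
        rcases hsupp _ h0 with h' | h'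
        · omega
        · rw [h'] at hred
          omega
      rw [Finsupp.add_apply, Finsupp.mapRange_apply, hnot, mul_zero, zero_add,
        Finsupp.mapRange_apply, hFmd,
        Finsupp.mapDomain_apply (mul_right_injective _), Finsupp.mapRange_apply]
      exact C.nzda_mul (C.fA_nzda j) (C.nzda_act hFx₀ (C.s j))

lemma TwS_expand (w : C.W) :
    ∃ F : C.W →₀ C.A, C.Φ F = C.TwS w ∧
      (∀ x : C.W, F x ≠ 0 → C.len x < C.len w ∨ x = w) ∧ C.NZDA (F w) := by
  classical
  obtain ⟨F0, hΦ, hsupp, htop⟩ := C.expand (C.redList w)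
  obtain ⟨hw, hl⟩ := C.red_spec w
  set u := C.redΩ w with hu
  set x₀ := ((C.redList w).map C.s).prod with hx₀
  have hlenw : C.len x₀ = C.len w := by
    rw [hw, C.len_omega]
  have hlen : C.len x₀ = (C.redList w).length := by omega
  refine ⟨Finsupp.mapDomain (fun x => (u : C.W) * x) (F0.mapRange (C.actA (u : C.W)) (map_zero _)),
    ?_, ?_, ?_⟩
  · rw [Φ_mulW, hΦ]
    rfl
  · intro x hx
    have hx' : x ∈ (Finsupp.mapDomain (fun x => (u : C.W) * x)
        (F0.mapRange (C.actA (u : C.W)) (map_zero _))).support := Finsupp.mem_support_iff.mpr hx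
    obtain ⟨y, hy, rfl⟩ := Finset.mem_image.mp (Finsupp.mapDomain_support hx')
    have hFy : F0 y ≠ 0 := by
      have h1 := Finsupp.mem_support_iff.mp hy
      rw [Finsupp.mapRange_apply] at h1
      intro h0
      rw [h0, map_zero] at h1
      exact h1 rfl
    rcases hsupp y hFy with h' | h'
    · left
      rw [C.len_omega u y]
      omega
    · right
      rw [h']
      exact hw.symm
  · rw [hw, Finsupp.mapDomain_apply (mul_right_injective _), Finsupp.mapRange_apply]
    exact C.nzda_act (htop hlen) (u : C.W)

/-! ### The master linear-independence lemma -/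

lemma master (v : C.P × C.W → C.SW) (H : C.P × C.W → C.W →₀ C.A)
    (hv : ∀ p, v p = C.Φ (H p))
    (hsupp : ∀ p x, H p x ≠ 0 → C.len x < C.len p.2 ∨ x = p.2)
    (htop : ∀ w : C.W, ∃ (h : C.A) (e : C.P → C.P), C.NZDA h ∧ Function.Injective e ∧
        ∀ μ : C.P, H (μ, w) w = h * C.toA (C.Xl (e μ))) :
    LinearIndependent C.L v := by
  classical
  rw [linearIndependent_iff]
  intro lc hlc
  by_contra hne
  have hsne : (lc.support.image Prod.snd).Nonempty :=
    (Finsupp.support_nonempty_iff.mpr hne).image _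
  obtain ⟨w, hwmem, hwmax⟩ := Finset.exists_max_image _ C.len hsne
  obtain ⟨p₀, hp₀, hp₀2⟩ := Finset.mem_image.mp hwmem
  obtain ⟨h, e, hh, he, hH⟩ := htop w
  have hS : (lc.sum fun p a => a • H p) = 0 := by
    refine C.Φ_injective ?_
    rw [map_zero, map_finsuppSum]
    rw [Finsupp.linearCombination_apply] at hlc
    rw [← hlc]
    exact Finsupp.sum_congr fun p _ => by rw [map_smul, hv]
  have hSw : (lc.sum fun p a => a • H p) w = 0 := by rw [hS]; rfl
  rw [Finsupp.sum_apply, Finsupp.sum] at hSw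
  have hfil : ∑ p ∈ lc.support.filter (fun p => p.2 = w), (lc p • H p) w = 0 := by
    rw [Finset.sum_filter_of_ne, hSw]
    intro p hp hne0
    have hne1 : H p w ≠ 0 := by
      intro h0
      rw [Finsupp.smul_apply, h0, smul_zero] at hne0
      exact hne0 rfl
    rcases hsupp p w hne1 with h' | h'
    · exfalso
      have : C.len p.2 ≤ C.len w := hwmax _ (Finset.mem_image.mpr ⟨p, hp, rfl⟩)
      omega
    · exact h'.symm
  have hmul : h * C.toA (∑ p ∈ lc.support.filter (fun p => p.2 = w), lc p • C.Xl (e p.1)) = 0 := by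
    rw [map_sum, Finset.mul_sum, ← hfil]
    refine Finset.sum_congr rfl fun p hp => ?_
    have hp2 : p.2 = w := (Finset.mem_filter.mp hp).2
    have hpe : p = (p.1, w) := by rw [← hp2]
    rw [Finsupp.smul_apply, hpe, hH p.1, map_smul, mul_smul_comm]
  have hg0 : (∑ p ∈ lc.support.filter (fun p => p.2 = w), lc p • C.Xl (e p.1)) = 0 := by
    have h1 := hh _ hmul
    obtain ⟨k, hk⟩ := C.A_ker _ h1
    exact C.regLP_pow C.regLP_delta k _ hk
  have hp₀f : p₀ ∈ lc.support.filter (fun p => p.2 = w) :=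
    Finset.mem_filter.mpr ⟨hp₀, hp₀2⟩
  have heval : (∑ p ∈ lc.support.filter (fun p => p.2 = w), lc p • C.Xl (e p.1)).coeff (e p₀.1)
      = lc p₀ := by
    rw [AddMonoidAlgebra.coeff_sum, Finset.sum_apply']
    rw [Finset.sum_eq_single p₀]
    · rw [AddMonoidAlgebra.coeff_smul_apply]
      have : (C.Xl (e p₀.1)).coeff (e p₀.1) = 1 := Finsupp.single_eq_same
      rw [this, smul_eq_mul, mul_one]
    · intro p hp hpne
      have hp2 : p.2 = w := (Finset.mem_filter.mp hp).2
      rw [AddMonoidAlgebra.coeff_smul_apply]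
      have hne1 : e p.1 ≠ e p₀.1 := by
        intro h0
        apply hpne
        have h1 : p.1 = p₀.1 := he h0
        exact Prod.ext h1 (by rw [hp2, hp₀2])
      have : (C.Xl (e p.1)).coeff (e p₀.1) = 0 := Finsupp.single_eq_of_ne' hne1
      rw [this, smul_zero]
    · intro h0
      exact (h0 hp₀f).elim
  rw [hg0] at heval
  have : lc p₀ ≠ 0 := Finsupp.mem_support_iff.mp hp₀
  exact this heval.symm

end DAHACtx

/-- The elements `X^μ Ť_w` (`μ ∈ P`, `w ∈ W`) are linearly independent over `𝕃` in
`𝒜 # W`;  likewise the elements `Ť_w X^μ` (`μ ∈ P`, `w ∈ W`) are linearly independent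
over `𝕃`. -/
theorem DL_linearIndependent (C : DAHACtx) :
    LinearIndependent C.L (fun p : C.P × C.W => C.XS p.1 * C.TwS p.2) ∧
    LinearIndependent C.L (fun p : C.P × C.W => C.TwS p.2 * C.XS p.1) := by
  classical
  choose F hΦ hsupp htop using C.TwS_expand
  constructor
  · refine C.master _ (fun p => (F p.2).mapRange (fun a => C.toA (C.Xl p.1) * a) (mul_zero _))
      (fun p => ?_) (fun p x hx => ?_) (fun w => ?_)
    · rw [C.Φ_mulA, hΦ]
      rfl
    · refine hsupp p.2 x ?_
      intro h0
      rw [Finsupp.mapRange_apply, h0, mul_zero] at hx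
      exact hx rfl
    · exact ⟨F w w, id, htop w, fun a b h => h, fun μ => by
        rw [Finsupp.mapRange_apply]; exact mul_comm _ _⟩
  · refine C.master _ (fun p => C.tw (fun x a => a * C.actA x (C.toA (C.Xl p.1))) (F p.2))
      (fun p => ?_) (fun p x hx => ?_) (fun w => ?_)
    · rw [C.Φ_tw, ← hΦ p.2, C.Φ_apply, Finsupp.sum, Finsupp.sum, Finset.sum_mul]
      refine Finset.sum_congr rfl fun x _ => ?_
      show C.ιA (F p.2 x) * ((C.ιW x : C.SWˣ) : C.SW) * C.XS p.1
          = C.ιA (F p.2 x * C.actA x (C.toA (C.Xl p.1))) * ((C.ιW x : C.SWˣ) : C.SW)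
      calc C.ιA (F p.2 x) * ((C.ιW x : C.SWˣ) : C.SW) * C.XS p.1
          = C.ιA (F p.2 x) * (((C.ιW x : C.SWˣ) : C.SW) * C.ιA (C.toA (C.Xl p.1))) := by
            rw [mul_assoc]; rfl
        _ = C.ιA (F p.2 x) * (C.ιA (C.actA x (C.toA (C.Xl p.1))) * ((C.ιW x : C.SWˣ) : C.SW)) := by
            rw [C.cross]
        _ = C.ιA (F p.2 x * C.actA x (C.toA (C.Xl p.1))) * ((C.ιW x : C.SWˣ) : C.SW) := by
            rw [map_mul, mul_assoc]
    · refine hsupp p.2 x ?_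
      intro h0
      rw [C.tw_apply (fun x a => a * C.actA x (C.toA (C.Xl p.1)))
        (fun y => zero_mul _) (F p.2) x, h0, zero_mul] at hx
      exact hx rfl
    · refine ⟨F w w, fun μ => C.grAct w μ, htop w, fun a b h => (Multiplicative.toAdd (C.grAct w) : AddAut C.P).injective h,
        fun μ => ?_⟩
      show C.tw (fun x a => a * C.actA x (C.toA (C.Xl μ))) (F w) w
          = F w w * C.toA (C.Xl (C.grAct w μ))
      rw [C.tw_apply (fun x a => a * C.actA x (C.toA (C.Xl μ))) (fun y => zero_mul _) (F w) w]
      rw [show C.Xl μ = AddMonoidAlgebra.of' C.L C.P μ from rfl, C.actA_X]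
      rfl
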